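/- Let a, b be non-negative integers and let W and Z be distinct 2D strings whose heights lie in [2^a, 2^(a+1)) and whose widths lie in [2^b, 2^(b+1)). If W^{3,3} and Z^{3,3} both occur at the same position of a 2D string A, then at least one of W and Z is not primitive. -/

import Mathlib

theorem pos_right_of_fin_mul {x m : ℕ} (i : Fin (x * m)) : 0 < m := by
  rcases Nat.eq_zero_or_pos m with h | h
  · subst h; have := i.isLt; omega
  · exact h

/-- The `x × y` tiling `A^{x,y}` of an `m × n` 2D string `A`. -/
def tile {α : Type*} {m n : ℕ} (A : Fin m → Fin n → α) (x y : ℕ) :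
    Fin (x * m) → Fin (y * n) → α := fun i j =>
  A ⟨i.1 % m, Nat.mod_lt _ (pos_right_of_fin_mul i)⟩
    ⟨j.1 % n, Nat.mod_lt _ (pos_right_of_fin_mul j)⟩

/-- The 2D string `P` (of size `hp × wp`) occurs at position `(i, j)` of `A` (of size `m × n`). -/
def Occurs {α : Type*} {hp wp m n : ℕ} (P : Fin hp → Fin wp → α)
    (A : Fin m → Fin n → α) (i j : ℕ) : Prop :=
  ∃ (h1 : i + hp ≤ m) (h2 : j + wp ≤ n),
    ∀ (a : Fin hp) (b : Fin wp),
      A ⟨i + a.1, by have := a.isLt; omega⟩ ⟨j + b.1, by have := b.isLt; omega⟩ = P a b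

/-- A 2D string `A` of size `m × n` is a tiling of its top-left `h × w` block. -/
def IsTileOf {α : Type*} {m n : ℕ} (A : Fin m → Fin n → α) (h w : ℕ) : Prop :=
  ∃ (_ : 0 < h) (_ : 0 < w), h ∣ m ∧ w ∣ n ∧
    ∀ (i : Fin m) (j : Fin n),
      A i j = A ⟨i.1 % h, Nat.lt_of_le_of_lt (Nat.mod_le _ _) i.isLt⟩
               ⟨j.1 % w, Nat.lt_of_le_of_lt (Nat.mod_le _ _) j.isLt⟩

/-- A 2D string is primitive if it is not a non-trivial tiling of a smaller 2D string. -/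
def Primitive2D {α : Type*} {m n : ℕ} (A : Fin m → Fin n → α) : Prop :=
  ∀ h w : ℕ, IsTileOf A h w → h = m ∧ w = n

theorem fw_aux {α : Type*} (f : ℕ → α) (p q L : ℕ) (hp : 0 < p) (hpq : p ≤ q)
    (hL : p + q ≤ L)
    (hfp : ∀ x, x + p < L → f (x + p) = f x)
    (hfq : ∀ x, x + q < L → f (x + q) = f x) :
    ∀ x, x + Nat.gcd p q < L → f (x + Nat.gcd p q) = f x := by
  rcases eq_or_lt_of_le hpq with heq | hlt
  · subst heq
    intro x hx
    rw [Nat.gcd_self] at hx ⊢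
    exact hfp x hx
  · set r := q - p with hr
    have hr0 : 0 < r := by omega
    have hg : Nat.gcd p q = Nat.gcd p r := (Nat.gcd_sub_self_right (le_of_lt hlt)).symm
    have perP : ∀ x, x + p < L - p → f (x + p) = f x := fun x hx => hfp x (by omega)
    have perR : ∀ x, x + r < L - p → f (x + r) = f x := by
      intro x hx
      have h1 := hfq x (by omega)
      have h2 := hfp (x + r) (by omega)
      have e : x + r + p = x + q := by omega
      rw [e] at h2
      rw [← h2]; exact h1
    have key : ∀ x, x + Nat.gcd p r < L - p → f (x + Nat.gcd p r) = f x := by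
      rcases le_total p r with h | h
      · exact fw_aux f p r (L - p) hp h (by omega) perP perR
      · intro x hx
        rw [Nat.gcd_comm p r] at hx ⊢
        exact fw_aux f r p (L - p) hr0 h (by omega) perR perP x hx
    have hgle : Nat.gcd p q ≤ r := by
      rw [hg]; exact Nat.le_of_dvd hr0 (Nat.gcd_dvd_right p r)
    intro x
    induction x using Nat.strong_induction_on with
    | _ x ihx =>
      intro hx
      rcases lt_or_ge (x + Nat.gcd p q) (L - p) with h | h
      · rw [hg] at h ⊢
        exact key x h
      · have hxp : p ≤ x := by omega
        have e1 := hfp (x - p) (by omega)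
        have e2 := hfp (x - p + Nat.gcd p q) (by omega)
        have e3 := ihx (x - p) (by omega) (by omega)
        have a1 : x - p + p = x := by omega
        have a2 : x - p + Nat.gcd p q + p = x + Nat.gcd p q := by omega
        rw [a1] at e1; rw [a2] at e2
        rw [e2, e3, e1]
termination_by p + q
decreasing_by all_goals omega

theorem periodic_mod {α : Type*} (f : ℕ → α) (g L : ℕ) (hg : 0 < g)
    (hf : ∀ x, x + g < L → f (x + g) = f x) :
    ∀ x, x < L → f x = f (x % g) := by
  intro x
  induction x using Nat.strong_induction_on with
  | _ x ih =>
    intro hx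
    rcases lt_or_ge x g with h | h
    · rw [Nat.mod_eq_of_lt h]
    · have a1 : x - g + g = x := by omega
      have e1 := hf (x - g) (by omega)
      rw [a1] at e1
      rw [e1, ih (x - g) (by omega) (by omega), Nat.mod_eq_sub_mod h]

theorem vert_case {α : Type*} {h1 w1 h2 w2 : ℕ}
    (W : Fin h1 → Fin w1 → α) (Z : Fin h2 → Fin w2 → α) (f : ℕ → ℕ → α)
    (hh1 : 0 < h1) (hw1 : 0 < w1) (hh2 : 0 < h2) (hw2 : 0 < w2)
    (hlt : h1 < h2) (hbig : h2 < 2 * h1) (hwle : w1 ≤ 3 * w2)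
    (hW : ∀ a b, a < 3 * h1 → b < 3 * w1 →
      f a b = W ⟨a % h1, Nat.mod_lt _ hh1⟩ ⟨b % w1, Nat.mod_lt _ hw1⟩)
    (hZ : ∀ a b, a < 3 * h2 → b < 3 * w2 →
      f a b = Z ⟨a % h2, Nat.mod_lt _ hh2⟩ ⟨b % w2, Nat.mod_lt _ hw2⟩) :
    ¬ Primitive2D W := by
  set g := Nat.gcd h1 h2 with hgdef
  have hg1 : g ∣ h1 := Nat.gcd_dvd_left h1 h2
  have hg0 : 0 < g := Nat.gcd_pos_of_pos_left _ hh1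
  have hgle : g ≤ h1 := Nat.le_of_dvd hh1 hg1
  have hgne : g ≠ h1 := by
    intro e
    have hdvd : h1 ∣ h2 := e ▸ Nat.gcd_dvd_right h1 h2
    obtain ⟨k, hk⟩ := hdvd
    have h2k : 2 ≤ k := by rcases k with _ | _ | k <;> omega
    have := Nat.mul_le_mul_left h1 h2k
    omega
  intro hprim
  refine hgne (hprim g w1 ⟨hg0, hw1, hg1, dvd_refl w1, ?_⟩).1
  intro ii jj
  have hjj3 : jj.1 < 3 * w1 := by have := jj.isLt; omega
  have hjj2 : jj.1 < 3 * w2 := by have := jj.isLt; omega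
  have per1 : ∀ x, x + h1 < 3 * h1 → f (x + h1) jj.1 = f x jj.1 := by
    intro x hx
    rw [hW (x + h1) jj.1 (by omega) hjj3, hW x jj.1 (by omega) hjj3]
    congr 1
    exact Fin.ext (Nat.add_mod_right x h1)
  have per2 : ∀ x, x + h2 < 3 * h1 → f (x + h2) jj.1 = f x jj.1 := by
    intro x hx
    rw [hZ (x + h2) jj.1 (by omega) hjj2, hZ x jj.1 (by omega) hjj2]
    congr 1
    exact Fin.ext (Nat.add_mod_right x h2)
  have perg := fw_aux (fun x => f x jj.1) h1 h2 (3 * h1) hh1 (le_of_lt hlt)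
    (by omega) per1 per2
  have hmod := periodic_mod (fun x => f x jj.1) g (3 * h1) hg0 perg
  have e1 : f ii.1 jj.1 = W ii jj := by
    rw [hW ii.1 jj.1 (by have := ii.isLt; omega) hjj3]
    congr 1 <;> exact Fin.ext (Nat.mod_eq_of_lt (by omega))
  have hmg : ii.1 % g < g := Nat.mod_lt _ hg0
  have hmh : ii.1 % g < h1 := by omega
  have e3 := hW (ii.1 % g) jj.1 (by omega) hjj3
  have efin : (⟨ii.1 % g % h1, Nat.mod_lt _ hh1⟩ : Fin h1) = ⟨ii.1 % g, hmh⟩ :=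
    Fin.ext (Nat.mod_eq_of_lt hmh)
  rw [efin] at e3
  calc W ii jj = f ii.1 jj.1 := e1.symm
    _ = f (ii.1 % g) jj.1 := hmod ii.1 (by have := ii.isLt; omega)
    _ = _ := e3

theorem transpose_tile {α : Type*} {m n h w : ℕ} (A : Fin m → Fin n → α)
    (ht : IsTileOf A h w) : IsTileOf (fun j i => A i j) w h := by
  obtain ⟨a, b, c, d, e⟩ := ht
  exact ⟨b, a, d, c, fun i j => e j i⟩

/-- If `W` and `Z` are distinct 2D strings with heights in `[2^a, 2^(a+1))` and widths in
`[2^b, 2^(b+1))`, and `W^{3,3}` and `Z^{3,3}` occur at the same position of `A`, then at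
least one of `W` and `Z` is not primitive. -/
theorem not_both_primitive {α : Type*} {h1 w1 h2 w2 m n : ℕ} (a b : ℕ)
    (W : Fin h1 → Fin w1 → α) (Z : Fin h2 → Fin w2 → α) (A : Fin m → Fin n → α)
    (hW1 : 2 ^ a ≤ h1) (hW2 : h1 < 2 ^ (a + 1))
    (hZ1 : 2 ^ a ≤ h2) (hZ2 : h2 < 2 ^ (a + 1))
    (hW3 : 2 ^ b ≤ w1) (hW4 : w1 < 2 ^ (b + 1))
    (hZ3 : 2 ^ b ≤ w2) (hZ4 : w2 < 2 ^ (b + 1))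
    (hne : ¬ ∃ (hh : h1 = h2) (hw : w1 = w2),
      ∀ (i : Fin h1) (j : Fin w1), W i j = Z (Fin.cast hh i) (Fin.cast hw j))
    (i j : ℕ) (ho1 : Occurs (tile W 3 3) A i j) (ho2 : Occurs (tile Z 3 3) A i j) :
    ¬ Primitive2D W ∨ ¬ Primitive2D Z := by
  have p2a : 0 < 2 ^ a := pow_pos (by norm_num) a
  have p2b : 0 < 2 ^ b := pow_pos (by norm_num) b
  have ea : (2 : ℕ) ^ (a + 1) = 2 * 2 ^ a := by rw [pow_succ]; ring
  have eb : (2 : ℕ) ^ (b + 1) = 2 * 2 ^ b := by rw [pow_succ]; ring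
  have hh1 : 0 < h1 := by omega
  have hw1 : 0 < w1 := by omega
  have hh2 : 0 < h2 := by omega
  have hw2 : 0 < w2 := by omega
  obtain ⟨hm1, hn1, hv1⟩ := ho1
  obtain ⟨hm2, hn2, hv2⟩ := ho2
  set d : α := W ⟨0, hh1⟩ ⟨0, hw1⟩ with hd
  set f : ℕ → ℕ → α := fun x y =>
    if h : i + x < m ∧ j + y < n then A ⟨i + x, h.1⟩ ⟨j + y, h.2⟩ else d with hf
  have hWf : ∀ x y, x < 3 * h1 → y < 3 * w1 →
      f x y = W ⟨x % h1, Nat.mod_lt _ hh1⟩ ⟨y % w1, Nat.mod_lt _ hw1⟩ := by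
    intro x y hx hy
    have hc : i + x < m ∧ j + y < n := ⟨by omega, by omega⟩
    simp only [hf]
    rw [dif_pos hc]
    exact hv1 ⟨x, hx⟩ ⟨y, hy⟩
  have hZf : ∀ x y, x < 3 * h2 → y < 3 * w2 →
      f x y = Z ⟨x % h2, Nat.mod_lt _ hh2⟩ ⟨y % w2, Nat.mod_lt _ hw2⟩ := by
    intro x y hx hy
    have hc : i + x < m ∧ j + y < n := ⟨by omega, by omega⟩
    simp only [hf]
    rw [dif_pos hc]
    exact hv2 ⟨x, hx⟩ ⟨y, hy⟩
  rcases Nat.lt_trichotomy h1 h2 with hlt | heq | hgt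
  · exact Or.inl (vert_case W Z f hh1 hw1 hh2 hw2 hlt (by omega) (by omega) hWf hZf)
  · subst heq
    rcases Nat.lt_trichotomy w1 w2 with hwlt | hweq | hwgt
    · have htr := vert_case (fun y x => W x y) (fun y x => Z x y) (fun x y => f y x)
        hw1 hh1 hw2 hh1 hwlt (by omega) (by omega)
        (fun p q hp hq => hWf q p hq hp) (fun p q hp hq => hZf q p hq hp)
      refine Or.inl fun hprim => htr ?_
      intro hh ww htile
      have := hprim ww hh (transpose_tile _ htile)
      exact ⟨this.2, this.1⟩
    · subst hweq
      exfalso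
      apply hne
      refine ⟨rfl, rfl, fun ii jj => ?_⟩
      have e1 := hWf ii.1 jj.1 (by have := ii.isLt; omega) (by have := jj.isLt; omega)
      have e2 := hZf ii.1 jj.1 (by have := ii.isLt; omega) (by have := jj.isLt; omega)
      have eii : (⟨ii.1 % h1, Nat.mod_lt _ hh1⟩ : Fin h1) = ii :=
        Fin.ext (Nat.mod_eq_of_lt ii.isLt)
      have ejj : (⟨jj.1 % w1, Nat.mod_lt _ hw1⟩ : Fin w1) = jj :=
        Fin.ext (Nat.mod_eq_of_lt jj.isLt)
      rw [eii, ejj] at e1 e2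
      exact e1.symm.trans e2
    · have htr := vert_case (fun y x => Z x y) (fun y x => W x y) (fun x y => f y x)
        hw2 hh1 hw1 hh1 hwgt (by omega) (by omega)
        (fun p q hp hq => hZf q p hq hp) (fun p q hp hq => hWf q p hq hp)
      refine Or.inr fun hprim => htr ?_
      intro hh ww htile
      have := hprim ww hh (transpose_tile _ htile)
      exact ⟨this.2, this.1⟩
  · exact Or.inr (vert_case Z W f hh2 hw2 hh1 hw1 hgt (by omega) (by omega) hZf hWf)
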